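/- Let X be a Hilbert space, T ∈ B(X) with a {1,3,7}-inverse S, and δT ∈ B(X) with I + S·δT invertible. If B = (I + S·δT)⁻¹S is a {1,3,7}-inverse of T̄ = T + δT, then R(T̄) ⊆ R(T). -/

import Mathlib

set_option maxHeartbeats 2000000 in
theorem stmt_6 {X : Type*} [NormedAddCommGroup X] [InnerProductSpace ℂ X]
    [CompleteSpace X] (T S δT : X →L[ℂ] X)
    (h1 : T * S * T = T)
    (h3 : ContinuousLinearMap.adjoint (T * S) = T * S)
    (h7 : T * S * S = S)
    (hinv : IsUnit (1 + S * δT))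
    (hB1 : (T + δT) * (Ring.inverse (1 + S * δT) * S) * (T + δT) = T + δT)
    (hB3 : ContinuousLinearMap.adjoint ((T + δT) * (Ring.inverse (1 + S * δT) * S)) =
      (T + δT) * (Ring.inverse (1 + S * δT) * S))
    (hB7 : (T + δT) * (Ring.inverse (1 + S * δT) * S) * (Ring.inverse (1 + S * δT) * S) =
      Ring.inverse (1 + S * δT) * S) :
    LinearMap.range ((T + δT : X →L[ℂ] X) : X →ₗ[ℂ] X) ≤ LinearMap.range (T : X →ₗ[ℂ] X) := by
  obtain ⟨u, hu⟩ := hinv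
  -- 1 + δT * S is also a unit
  have hV : IsUnit (1 + δT * S) := by
    have key : (1 + δT * S) * (1 - δT * ↑u⁻¹ * S) = 1 := by
      have h2 : δT * ((1 + S * δT) * ↑u⁻¹) * S = δT * S := by
        rw [← hu, Units.mul_inv, mul_one]
      calc (1 + δT * S) * (1 - δT * ↑u⁻¹ * S)
          = 1 + δT * S - δT * ((1 + S * δT) * ↑u⁻¹) * S := by noncomm_ring
        _ = 1 := by rw [h2]; abel
    have key' : (1 - δT * ↑u⁻¹ * S) * (1 + δT * S) = 1 := by
      have h2 : δT * (↑u⁻¹ * (1 + S * δT)) * S = δT * S := by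
        rw [← hu, Units.inv_mul, mul_one]
      calc (1 - δT * ↑u⁻¹ * S) * (1 + δT * S)
          = 1 + δT * S - δT * (↑u⁻¹ * (1 + S * δT)) * S := by noncomm_ring
        _ = 1 := by rw [h2]; abel
    exact ⟨⟨_, _, key, key'⟩, rfl⟩
  obtain ⟨v, hv⟩ := hV
  have hRingInv : Ring.inverse (1 + S * δT) = (↑u⁻¹ : X →L[ℂ] X) := by
    rw [← hu, Ring.inverse_unit]
  have hSv : (↑u⁻¹ : X →L[ℂ] X) * S = S * ↑v⁻¹ := by
    have huv : (↑u : X →L[ℂ] X) * (S * ↑v⁻¹) = S := by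
      rw [hu]
      calc (1 + S * δT) * (S * ↑v⁻¹) = S * ((1 + δT * S) * ↑v⁻¹) := by noncomm_ring
        _ = S * (↑v * ↑v⁻¹) := by rw [hv]
        _ = S := by rw [Units.mul_inv, mul_one]
    calc (↑u⁻¹ : X →L[ℂ] X) * S = ↑u⁻¹ * (↑u * (S * ↑v⁻¹)) := by rw [huv]
      _ = S * ↑v⁻¹ := by rw [← mul_assoc, Units.inv_mul, one_mul]
  set W : X →L[ℂ] X := (1 - T * S) * ↑v⁻¹ with hW
  -- Q = (T+δT) * B = 1 - W
  have hQ : (T + δT) * (Ring.inverse (1 + S * δT) * S) = 1 - W := by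
    rw [hRingInv, hSv, hW]
    have hd : δT * S * ↑v⁻¹ = 1 - ↑v⁻¹ := by
      have : (↑v - 1 : X →L[ℂ] X) * ↑v⁻¹ = 1 - ↑v⁻¹ := by
        rw [sub_mul, Units.mul_inv, one_mul]
      rw [← this, hv]; noncomm_ring
    calc (T + δT) * (S * ↑v⁻¹) = T * S * ↑v⁻¹ + δT * S * ↑v⁻¹ := by noncomm_ring
      _ = T * S * ↑v⁻¹ + (1 - ↑v⁻¹) := by rw [hd]
      _ = 1 - (1 - T * S) * ↑v⁻¹ := by noncomm_ring
  -- W is self-adjoint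
  have hstar3 : star (T * S) = T * S := by
    rw [ContinuousLinearMap.star_eq_adjoint]; exact h3
  have hstarW : star W = W := by
    have hQstar : star ((1 : X →L[ℂ] X) - W) = 1 - W := by
      rw [← hQ, ContinuousLinearMap.star_eq_adjoint]; exact hB3
    have := hQstar
    rw [star_sub, star_one] at this
    have : star W = W := by linear_combination (norm := abel) -this
    exact this
  -- (T*S) idempotent
  have hP2 : (T * S) * (T * S) = T * S := by
    calc (T * S) * (T * S) = (T * S * T) * S := by noncomm_ring
      _ = T * S := by rw [h1]
  -- W * (1 - T*S) = W, hence W * (T*S) = 0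
  have hWE : W * (1 - T * S) = W := by
    have hE2 : ((1 : X →L[ℂ] X) - T * S) * (1 - T * S) = 1 - T * S := by
      calc ((1 : X →L[ℂ] X) - T * S) * (1 - T * S)
          = 1 - T * S - T * S + (T * S) * (T * S) := by noncomm_ring
        _ = 1 - T * S := by rw [hP2]; abel
    have hWform : W = star (↑v⁻¹ : X →L[ℂ] X) * (1 - T * S) := by
      rw [← hstarW, hW, star_mul, star_sub, star_one, hstar3]
    calc W * (1 - T * S) = star (↑v⁻¹ : X →L[ℂ] X) * ((1 - T * S) * (1 - T * S)) := by
          rw [hWform]; noncomm_ring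
      _ = star (↑v⁻¹ : X →L[ℂ] X) * (1 - T * S) := by rw [hE2]
      _ = W := hWform.symm
  have hWP : W * (T * S) = 0 := by
    have := hWE
    calc W * (T * S) = W * 1 - W * (1 - T * S) := by noncomm_ring
      _ = 0 := by rw [hWE, mul_one, sub_self]
  -- From hB1 : (1 - W) * (T + δT) = T + δT, so W * (T + δT) = 0
  have hWT : W * (T + δT) = 0 := by
    have h := hB1
    rw [hQ] at h
    calc W * (T + δT) = (T + δT) - (1 - W) * (T + δT) := by noncomm_ring
      _ = 0 := by rw [h, sub_self]
  -- Multiply by S on the right: 0 = W*(T*S) + W*(δT*S) = 0 + (1 - T*S) - W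
  have hWeq : W = 1 - T * S := by
    have h0 : W * ((T + δT) * S) = 0 := by
      rw [← mul_assoc, hWT, zero_mul]
    have hWv : W * (δT * S) = (1 - T * S) - W := by
      have : W * (↑v - 1 : X →L[ℂ] X) = (1 - T * S) - W := by
        rw [mul_sub, mul_one, hW, mul_assoc, Units.inv_mul, mul_one]
      rw [← this, hv]; noncomm_ring
    have : W * ((T + δT) * S) = (1 - T * S) - W := by
      calc W * ((T + δT) * S) = W * (T * S) + W * (δT * S) := by noncomm_ring
        _ = (1 - T * S) - W := by rw [hWP, hWv, zero_add]
    rw [h0] at this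
    have := this.symm
    rw [sub_eq_zero] at this
    exact this.symm
  -- Hence (T+δT)*B = T*S, and T*S*(T+δT) = T+δT
  have hfinal : T * S * (T + δT) = T + δT := by
    have h := hB1
    rw [hQ, hWeq] at h
    calc T * S * (T + δT) = (1 - (1 - T * S)) * (T + δT) := by noncomm_ring
      _ = T + δT := h
  rintro y ⟨x, rfl⟩
  refine ⟨S ((T + δT) x), ?_⟩
  have := congrArg (fun f : X →L[ℂ] X => f x) hfinal
  simpa using this
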